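/- Let (X, ‖·‖) be a Banach space, let T : X → X be a (k, h)-enriched Bianchini mapping with k ∈ [0, ∞) and h ∈ (0, 1), let λ = 1/(k+1), let p be the unique fixed point of T, and let (xₙ) be the Krasnoselskij iteration xₙ₊₁ = (1−λ)xₙ + λT xₙ with arbitrary x₀ ∈ X. Then the error estimates ‖xₙ − p‖ ≤ (hⁿ/(1−h))·‖x₁ − x₀‖ and ‖xₙ − p‖ ≤ (h/(1−h))·‖xₙ − xₙ₋₁‖ hold for all n ≥ 1. -/

import Mathlib

/-- Error estimates for the Krasnoselskij iteration associated to a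
`(k, h)`-enriched Bianchini mapping: for all `n ≥ 1`,
`‖xₙ − p‖ ≤ (hⁿ/(1−h))·‖x₁ − x₀‖` and `‖xₙ − p‖ ≤ (h/(1−h))·‖xₙ − xₙ₋₁‖`. -/
theorem enrichedBianchini_krasnoselskij_estimates
    {X : Type*} [NormedAddCommGroup X] [NormedSpace ℝ X] [CompleteSpace X]
    (T : X → X) (k h : ℝ) (hk : 0 ≤ k) (hh0 : 0 < h) (hh : h < 1)
    (hT : ∀ x y : X, ‖k • (x - y) + (T x - T y)‖ ≤ h * max ‖x - T x‖ ‖y - T y‖)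
    (p : X) (hp : T p = p) (hpu : ∀ q : X, T q = q → q = p)
    (x : ℕ → X)
    (hx : ∀ n : ℕ, x (n + 1) = (1 - 1 / (k + 1)) • x n + (1 / (k + 1)) • T (x n)) :
    ∀ n : ℕ, 1 ≤ n →
      ‖x n - p‖ ≤ h ^ n / (1 - h) * ‖x 1 - x 0‖ ∧
      ‖x n - p‖ ≤ h / (1 - h) * ‖x n - x (n - 1)‖ := by
  set S : X → X := fun a => (1 - 1 / (k + 1)) • a + (1 / (k + 1)) • T a with hS
  have hk1 : (0:ℝ) < k + 1 := by linarith
  set l : ℝ := 1 / (k + 1) with hl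
  have hlpos : 0 < l := by positivity
  have h1l : 1 - l = l * k := by rw [hl]; field_simp; ring
  have hxS : ∀ n, x (n + 1) = S (x n) := fun n => hx n
  have e2 : ∀ a : X, a - S a = l • (a - T a) := by
    intro a
    show a - ((1 - 1/(k+1)) • a + (1/(k+1)) • T a) = l • (a - T a)
    rw [← hl]; module
  have e1 : ∀ a b : X, S a - S b = l • (k • (a - b) + (T a - T b)) := by
    intro a b
    simp only [hS, ← hl, h1l]
    module
  have key : ∀ a b : X, ‖S a - S b‖ ≤ h * max ‖a - S a‖ ‖b - S b‖ := by
    intro a b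
    rw [e1, e2, e2, norm_smul, norm_smul, norm_smul,
      Real.norm_eq_abs, abs_of_pos hlpos]
    calc l * ‖k • (a - b) + (T a - T b)‖
        ≤ l * (h * max ‖a - T a‖ ‖b - T b‖) := by
          exact mul_le_mul_of_nonneg_left (hT a b) hlpos.le
      _ = h * max (l * ‖a - T a‖) (l * ‖b - T b‖) := by
          rw [← mul_max_of_nonneg _ _ hlpos.le]; ring
  have hSp : S p = p := by
    show (1 - 1/(k+1)) • p + (1/(k+1)) • T p = p
    rw [hp]; module
  have hstep : ∀ a : X, ‖S a - p‖ ≤ h * ‖a - S a‖ := by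
    intro a
    have := key a p
    rwa [hSp, sub_self, norm_zero, max_eq_left (norm_nonneg _)] at this
  have hd : ∀ n : ℕ, ‖x (n + 2) - x (n + 1)‖ ≤ h * ‖x (n + 1) - x n‖ := by
    intro n
    have hkey := key (x (n + 1)) (x n)
    rw [← hxS, ← hxS] at hkey
    have h1 : ‖x (n + 2) - x (n + 1)‖ = ‖x (n + 1) - x (n + 2)‖ := norm_sub_rev _ _
    rcases max_cases ‖x (n + 1) - x (n + 2)‖ ‖x n - x (n + 1)‖ with ⟨he, _⟩ | ⟨he, _⟩
    · rw [he, ← h1] at hkey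
      have h0 : ‖x (n + 2) - x (n + 1)‖ ≤ 0 := by nlinarith
      have := norm_nonneg (x (n + 1) - x n)
      nlinarith [norm_nonneg (x (n + 2) - x (n + 1))]
    · rw [he] at hkey
      rw [h1]
      calc ‖x (n + 1) - x (n + 2)‖ = ‖x (n+2) - x (n+1)‖ := norm_sub_rev _ _
        _ ≤ h * ‖x n - x (n+1)‖ := hkey
        _ = h * ‖x (n+1) - x n‖ := by rw [norm_sub_rev]
  have dgeom : ∀ n : ℕ, ‖x (n + 1) - x n‖ ≤ h ^ n * ‖x 1 - x 0‖ := by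
    intro n
    induction n with
    | zero => simp
    | succ m ih =>
      calc ‖x (m + 2) - x (m + 1)‖ ≤ h * ‖x (m + 1) - x m‖ := hd m
        _ ≤ h * (h ^ m * ‖x 1 - x 0‖) := by nlinarith
        _ = h ^ (m + 1) * ‖x 1 - x 0‖ := by ring
  intro n hn
  obtain ⟨m, rfl⟩ : ∃ m, n = m + 1 := ⟨n - 1, (Nat.succ_pred_eq_of_pos hn).symm⟩
  have hbase : ‖x (m + 1) - p‖ ≤ h * ‖x (m + 1) - x m‖ := by
    have := hstep (x m)
    rw [← hxS] at this
    calc ‖x (m+1) - p‖ ≤ h * ‖x m - x (m+1)‖ := this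
      _ = h * ‖x (m+1) - x m‖ := by rw [norm_sub_rev]
  have h1h : (0:ℝ) < 1 - h := by linarith
  have hhle : h ≤ h / (1 - h) := by
    rw [le_div_iff₀ h1h]; nlinarith
  constructor
  · calc ‖x (m + 1) - p‖ ≤ h * ‖x (m + 1) - x m‖ := hbase
      _ ≤ h * (h ^ m * ‖x 1 - x 0‖) := by nlinarith [dgeom m, norm_nonneg (x (m+1) - x m)]
      _ = h ^ (m + 1) * ‖x 1 - x 0‖ := by ring
      _ ≤ h ^ (m + 1) / (1 - h) * ‖x 1 - x 0‖ := by
          apply mul_le_mul_of_nonneg_right _ (norm_nonneg _)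
          rw [le_div_iff₀ h1h]
          nlinarith [pow_pos hh0 (m + 1)]
  · simp only [Nat.add_sub_cancel]
    calc ‖x (m + 1) - p‖ ≤ h * ‖x (m + 1) - x m‖ := hbase
      _ ≤ h / (1 - h) * ‖x (m + 1) - x m‖ :=
          mul_le_mul_of_nonneg_right hhle (norm_nonneg _)
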